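/- arXiv:2102.03730 — 2 statements merged into one kernel-verified Lean document; each statement's English description precedes it below -/
import Mathlib

section
/- Let C be a graded classical 2-absorbing second submodule of M and let I = ⊕_{β∈G} I_β and J = ⊕_{γ∈G} J_γ be graded ideals of R. Then for every r ∈ h(R), every β, γ ∈ G, and every completely graded irreducible submodule U of M with r·I_β·J_γ·C ⊆ U, either r·I_β·C ⊆ U or r·J_γ·C ⊆ U or I_β·J_γ·C ⊆ U. -/
open Pointwise

section GradedDefs

variable {G : Type*} [Group G] [DecidableEq G] {R : Type*} [CommRing R]
  {M : Type*} [AddCommGroup M] [Module R M]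

/-- `R` is a `G`-graded commutative ring via the additive subgroups `𝒜 α`:
`R_α R_β ⊆ R_{αβ}` and `R = ⊕_{α ∈ G} R_α`. -/
structure IsRingGrading (𝒜 : G → AddSubgroup R) : Prop where
  one_mem : (1 : R) ∈ 𝒜 1
  mul_mem : ∀ ⦃α β : G⦄ ⦃r s : R⦄, r ∈ 𝒜 α → s ∈ 𝒜 β → r * s ∈ 𝒜 (α * β)
  isInternal : DirectSum.IsInternal 𝒜

/-- `M` is a graded module over the `G`-graded ring `R`:
`R_α M_β ⊆ M_{αβ}` and `M = ⊕_{α ∈ G} M_α`. -/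
structure IsModuleGrading (𝒜 : G → AddSubgroup R) (ℳ : G → AddSubgroup M) : Prop where
  smul_mem : ∀ ⦃α β : G⦄ ⦃r : R⦄ ⦃m : M⦄, r ∈ 𝒜 α → m ∈ ℳ β → r • m ∈ ℳ (α * β)
  isInternal : DirectSum.IsInternal ℳ

/-- A submodule `N` of `M` is a graded submodule iff `N = ⊕_{α ∈ G} (N ∩ M_α)`,
equivalently, every element of `N` is a sum of homogeneous elements of `N`. -/
def IsGradedSubmodule (ℳ : G → AddSubgroup M) (N : Submodule R M) : Prop :=
  ∀ n ∈ N, n ∈ Submodule.span R {m : M | m ∈ N ∧ ∃ α, m ∈ ℳ α}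

/-- An ideal `I` of `R` is a graded ideal iff `I = ⊕_{α ∈ G} (I ∩ R_α)`. -/
def IsGradedIdeal (𝒜 : G → AddSubgroup R) (I : Ideal R) : Prop :=
  ∀ r ∈ I, r ∈ Ideal.span {s : R | s ∈ I ∧ ∃ α, s ∈ 𝒜 α}

/-- A proper graded submodule `C` of `M` is completely graded irreducible if whenever
`C = ⋂_{λ ∈ Δ} C_λ` for a family of graded submodules `C_λ`, then `C = C_β` for some `β`. -/
def CompletelyGradedIrreducible (ℳ : G → AddSubgroup M) (C : Submodule R M) : Prop :=
  IsGradedSubmodule ℳ C ∧ C ≠ ⊤ ∧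
    ∀ S : Set (Submodule R M), (∀ D ∈ S, IsGradedSubmodule ℳ D) → C = sInf S → C ∈ S

/-- A non-zero graded submodule `C` of `M` is a graded classical 2-absorbing second submodule
if whenever `r, s, t ∈ h(R)`, `U` is a completely graded irreducible submodule of `M` and
`r·s·t·C ⊆ U`, then `r·s·C ⊆ U` or `s·t·C ⊆ U` or `r·t·C ⊆ U`. -/
def IsGrClassical2AbsorbingSecond (𝒜 : G → AddSubgroup R) (ℳ : G → AddSubgroup M)
    (C : Submodule R M) : Prop :=
  C ≠ ⊥ ∧ IsGradedSubmodule ℳ C ∧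
    ∀ r s t : R, (∃ α, r ∈ 𝒜 α) → (∃ β, s ∈ 𝒜 β) → (∃ γ, t ∈ 𝒜 γ) →
      ∀ U : Submodule R M, CompletelyGradedIrreducible ℳ U →
        r • s • t • C ≤ U → (r • s • C ≤ U ∨ s • t • C ≤ U ∨ r • t • C ≤ U)

/-- A non-zero graded submodule `C` of `M` is a graded strongly classical 2-absorbing second
submodule if whenever `r, s, t ∈ h(R)`, `U₁, U₂, U₃` are completely graded irreducible
submodules of `M` and `r·s·t·C ⊆ U₁ ∩ U₂ ∩ U₃`, then `r·s·C ⊆ U₁ ∩ U₂ ∩ U₃` or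
`s·t·C ⊆ U₁ ∩ U₂ ∩ U₃` or `r·t·C ⊆ U₁ ∩ U₂ ∩ U₃`. -/
def IsGrStronglyClassical2AbsorbingSecond (𝒜 : G → AddSubgroup R) (ℳ : G → AddSubgroup M)
    (C : Submodule R M) : Prop :=
  C ≠ ⊥ ∧ IsGradedSubmodule ℳ C ∧
    ∀ r s t : R, (∃ α, r ∈ 𝒜 α) → (∃ β, s ∈ 𝒜 β) → (∃ γ, t ∈ 𝒜 γ) →
      ∀ U₁ U₂ U₃ : Submodule R M, CompletelyGradedIrreducible ℳ U₁ →
        CompletelyGradedIrreducible ℳ U₂ → CompletelyGradedIrreducible ℳ U₃ →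
        r • s • t • C ≤ U₁ ⊓ U₂ ⊓ U₃ →
        (r • s • C ≤ U₁ ⊓ U₂ ⊓ U₃ ∨ s • t • C ≤ U₁ ⊓ U₂ ⊓ U₃ ∨ r • t • C ≤ U₁ ⊓ U₂ ⊓ U₃)

/-- A non-zero graded submodule `S` of `M` is a graded weakly second submodule if whenever
`r, s ∈ h(R)`, `N` is a graded submodule of `M` and `r·s·S ⊆ N`, then `r·S ⊆ N` or `s·S ⊆ N`. -/
def IsGrWeaklySecond (𝒜 : G → AddSubgroup R) (ℳ : G → AddSubgroup M)
    (S : Submodule R M) : Prop :=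
  S ≠ ⊥ ∧ IsGradedSubmodule ℳ S ∧
    ∀ r s : R, (∃ α, r ∈ 𝒜 α) → (∃ β, s ∈ 𝒜 β) →
      ∀ N : Submodule R M, IsGradedSubmodule ℳ N →
        r • s • S ≤ N → (r • S ≤ N ∨ s • S ≤ N)

/-- A proper graded ideal `I` of `R` is a graded 2-absorbing ideal if whenever `r, s, t ∈ h(R)`
with `r·s·t ∈ I`, then `r·s ∈ I` or `r·t ∈ I` or `s·t ∈ I`. -/
def IsGr2AbsorbingIdeal (𝒜 : G → AddSubgroup R) (I : Ideal R) : Prop :=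
  I ≠ ⊤ ∧ IsGradedIdeal 𝒜 I ∧
    ∀ r s t : R, (∃ α, r ∈ 𝒜 α) → (∃ β, s ∈ 𝒜 β) → (∃ γ, t ∈ 𝒜 γ) →
      r * s * t ∈ I → (r * s ∈ I ∨ r * t ∈ I ∨ s * t ∈ I)

end GradedDefs

private lemma smul_le_iff' {R : Type*} [CommRing R] {M : Type*} [AddCommGroup M] [Module R M]
    (x : R) (N U : Submodule R M) : x • N ≤ U ↔ ∀ c ∈ N, x • c ∈ U := by
  constructor
  · intro h c hc
    exact h (Submodule.smul_mem_pointwise_smul c x N hc)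
  · intro h y hy
    obtain ⟨c, hc, rfl⟩ := Set.mem_smul_set.mp hy
    exact h c hc

private lemma smul2_le_iff' {R : Type*} [CommRing R] {M : Type*} [AddCommGroup M] [Module R M]
    (x y : R) (N U : Submodule R M) : x • y • N ≤ U ↔ ∀ c ∈ N, x • y • c ∈ U := by
  rw [smul_le_iff']
  constructor
  · intro h c hc
    exact h _ (Submodule.smul_mem_pointwise_smul c y N hc)
  · intro h d hd
    obtain ⟨c, hc, rfl⟩ := Set.mem_smul_set.mp hd
    exact h c hc

theorem stmt1 {G : Type*} [Group G] [DecidableEq G] {R : Type*} [CommRing R]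
    {M : Type*} [AddCommGroup M] [Module R M]
    (𝒜 : G → AddSubgroup R) (ℳ : G → AddSubgroup M)
    (h𝒜 : IsRingGrading 𝒜) (hℳ : IsModuleGrading 𝒜 ℳ)
    (C : Submodule R M) (hC : IsGrClassical2AbsorbingSecond 𝒜 ℳ C)
    (I J : Ideal R) (hI : IsGradedIdeal 𝒜 I) (hJ : IsGradedIdeal 𝒜 J)
    (r : R) (hr : ∃ α, r ∈ 𝒜 α) (β γ : G)
    (U : Submodule R M) (hU : CompletelyGradedIrreducible ℳ U)
    (hsub : ∀ a b : R, a ∈ I → a ∈ 𝒜 β → b ∈ J → b ∈ 𝒜 γ → r • a • b • C ≤ U) :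
    (∀ a : R, a ∈ I → a ∈ 𝒜 β → r • a • C ≤ U) ∨
      (∀ b : R, b ∈ J → b ∈ 𝒜 γ → r • b • C ≤ U) ∨
      (∀ a b : R, a ∈ I → a ∈ 𝒜 β → b ∈ J → b ∈ 𝒜 γ → a • b • C ≤ U) := by
  by_contra hcon
  push_neg at hcon
  obtain ⟨⟨a₀, ha₀I, ha₀β, ha₀⟩, ⟨b₀, hb₀J, hb₀γ, hb₀⟩, a₁, b₁, ha₁I, ha₁β, hb₁J, hb₁γ, hab⟩ := hcon
  -- key consequence of the 2-absorbing hypothesis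
  have H : ∀ a b : R, a ∈ I → a ∈ 𝒜 β → b ∈ J → b ∈ 𝒜 γ →
      ¬ (r • a • C ≤ U) → ¬ (r • b • C ≤ U) → a • b • C ≤ U := by
    intro a b haI haβ hbJ hbγ hna hnb
    rcases hC.2.2 r a b hr ⟨β, haβ⟩ ⟨γ, hbγ⟩ U hU (hsub a b haI haβ hbJ hbγ) with h | h | h
    · exact absurd h hna
    · exact h
    · exact absurd h hnb
  -- if r•a•C ≤ U and r•a'•C is not contained, then neither is r•(a'+a)•C
  have sumNot : ∀ a a' : R, r • a • C ≤ U → ¬ (r • a' • C ≤ U) → ¬ (r • (a' + a) • C ≤ U) := by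
    intro a a' h1 h2 h3
    apply h2
    rw [smul2_le_iff'] at h1 h3 ⊢
    intro c hc
    have : r • a' • c = r • (a' + a) • c - r • a • c := by
      rw [add_smul, smul_add]; abel
    rw [this]
    exact sub_mem (h3 c hc) (h1 c hc)
  by_cases hra : r • a₁ • C ≤ U <;> by_cases hrb : r • b₁ • C ≤ U
  · -- both contained: use a₀+a₁ and b₀+b₁
    have ha2 : ¬ (r • (a₀ + a₁) • C ≤ U) := sumNot a₁ a₀ hra ha₀
    have hb2 : ¬ (r • (b₀ + b₁) • C ≤ U) := sumNot b₁ b₀ hrb hb₀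
    have h00 : a₀ • b₀ • C ≤ U := H a₀ b₀ ha₀I ha₀β hb₀J hb₀γ ha₀ hb₀
    have h22 : (a₀ + a₁) • (b₀ + b₁) • C ≤ U :=
      H _ _ (I.add_mem ha₀I ha₁I) ((𝒜 β).add_mem ha₀β ha₁β)
        (J.add_mem hb₀J hb₁J) ((𝒜 γ).add_mem hb₀γ hb₁γ) ha2 hb2
    have h20 : (a₀ + a₁) • b₀ • C ≤ U :=
      H _ _ (I.add_mem ha₀I ha₁I) ((𝒜 β).add_mem ha₀β ha₁β) hb₀J hb₀γ ha2 hb₀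
    have h02 : a₀ • (b₀ + b₁) • C ≤ U :=
      H _ _ ha₀I ha₀β (J.add_mem hb₀J hb₁J) ((𝒜 γ).add_mem hb₀γ hb₁γ) ha₀ hb2
    apply hab
    rw [smul2_le_iff'] at h00 h22 h20 h02 ⊢
    intro c hc
    have key : a₁ • b₁ • c =
        (a₀ + a₁) • (b₀ + b₁) • c - (a₀ + a₁) • b₀ • c - a₀ • (b₀ + b₁) • c + a₀ • b₀ • c := by
      simp only [add_smul, smul_add]; abel
    rw [key]
    exact add_mem (sub_mem (sub_mem (h22 c hc) (h20 c hc)) (h02 c hc)) (h00 c hc)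
  · -- r•a₁•C ≤ U, r•b₁•C not: use a₀+a₁ with b₁
    have ha2 : ¬ (r • (a₀ + a₁) • C ≤ U) := sumNot a₁ a₀ hra ha₀
    have h21 : (a₀ + a₁) • b₁ • C ≤ U :=
      H _ _ (I.add_mem ha₀I ha₁I) ((𝒜 β).add_mem ha₀β ha₁β) hb₁J hb₁γ ha2 hrb
    have h01 : a₀ • b₁ • C ≤ U := H _ _ ha₀I ha₀β hb₁J hb₁γ ha₀ hrb
    apply hab
    rw [smul2_le_iff'] at h21 h01 ⊢
    intro c hc
    have key : a₁ • b₁ • c = (a₀ + a₁) • b₁ • c - a₀ • b₁ • c := by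
      simp only [add_smul, smul_add]; abel
    rw [key]
    exact sub_mem (h21 c hc) (h01 c hc)
  · -- r•b₁•C ≤ U, r•a₁•C not: use a₁ with b₀+b₁
    have hb2 : ¬ (r • (b₀ + b₁) • C ≤ U) := sumNot b₁ b₀ hrb hb₀
    have h12 : a₁ • (b₀ + b₁) • C ≤ U :=
      H _ _ ha₁I ha₁β (J.add_mem hb₀J hb₁J) ((𝒜 γ).add_mem hb₀γ hb₁γ) hra hb2
    have h10 : a₁ • b₀ • C ≤ U := H _ _ ha₁I ha₁β hb₀J hb₀γ hra hb₀
    apply hab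
    rw [smul2_le_iff'] at h12 h10 ⊢
    intro c hc
    have key : a₁ • b₁ • c = a₁ • (b₀ + b₁) • c - a₁ • b₀ • c := by
      simp only [add_smul, smul_add]; abel
    rw [key]
    exact sub_mem (h12 c hc) (h10 c hc)
  · exact hab (H a₁ b₁ ha₁I ha₁β hb₁J hb₁γ hra hrb)
end

section
/- Let C be a non-zero graded submodule of M. Then C is a graded strongly classical 2-absorbing second submodule of M if and only if for every r, s, t ∈ h(R) and every graded submodule N of M with r·s·t·C ⊆ N, either r·s·C ⊆ N or s·t·C ⊆ N or r·t·C ⊆ N. -/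
open Pointwise

section Aux

variable {G : Type*} [Group G] [DecidableEq G]

set_option linter.unusedSectionVars false

/-- The `γ`-component of an element with respect to an internal grading. -/
noncomputable def gradeComp {A : Type*} [AddCommGroup A] (ℬ : G → AddSubgroup A)
    (h : DirectSum.IsInternal ℬ) (γ : G) (a : A) : A :=
  (((AddEquiv.ofBijective (DirectSum.coeAddMonoidHom ℬ) h).symm a) γ : A)

variable {A : Type*} [AddCommGroup A] {ℬ : G → AddSubgroup A} (h : DirectSum.IsInternal ℬ)

theorem gradeComp_mem (γ : G) (a : A) : gradeComp ℬ h γ a ∈ ℬ γ :=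
  SetLike.coe_mem _

theorem gradeComp_zero (γ : G) : gradeComp ℬ h γ (0 : A) = 0 := by
  simp [gradeComp]

theorem gradeComp_add (γ : G) (a b : A) :
    gradeComp ℬ h γ (a + b) = gradeComp ℬ h γ a + gradeComp ℬ h γ b := by
  simp [gradeComp]

theorem gradeComp_sum {ι : Type*} (γ : G) (s : Finset ι) (f : ι → A) :
    gradeComp ℬ h γ (∑ i ∈ s, f i) = ∑ i ∈ s, gradeComp ℬ h γ (f i) := by
  exact map_sum (AddMonoidHom.mk' (gradeComp ℬ h γ) (gradeComp_add h γ)) f s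

theorem gradeComp_of_mem {δ γ : G} {a : A} (ha : a ∈ ℬ δ) :
    gradeComp ℬ h γ a = if γ = δ then a else 0 := by
  have key : (AddEquiv.ofBijective (DirectSum.coeAddMonoidHom ℬ) h).symm a
      = DirectSum.of (fun i => ℬ i) δ ⟨a, ha⟩ := by
    apply (AddEquiv.ofBijective (DirectSum.coeAddMonoidHom ℬ) h).injective
    simp [AddEquiv.apply_symm_apply, AddEquiv.ofBijective_apply,
      DirectSum.coeAddMonoidHom_of]
    exact (DirectSum.coeAddMonoidHom_of ℬ δ ⟨a, ha⟩).symm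
  unfold gradeComp
  rw [key]
  rcases eq_or_ne γ δ with rfl | hne
  · rw [DirectSum.of_eq_same, if_pos rfl]
  · rw [DirectSum.of_eq_of_ne _ _ _ hne, if_neg hne]
    rfl

theorem exists_sum_gradeComp (a : A) :
    ∃ s : Finset G, a = ∑ γ ∈ s, gradeComp ℬ h γ a := by
  classical
  set e := AddEquiv.ofBijective (DirectSum.coeAddMonoidHom ℬ) h with he
  refine ⟨(e.symm a).support, ?_⟩
  conv_lhs => rw [← e.apply_symm_apply a, ← DirectSum.sum_support_of (e.symm a)]
  rw [map_sum]
  refine Finset.sum_congr rfl fun γ _ => ?_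
  simp [he, AddEquiv.ofBijective_apply, DirectSum.coeAddMonoidHom_of, gradeComp]
  exact DirectSum.coeAddMonoidHom_of _ _ _

end Aux

section Graded

variable {G : Type*} [Group G] [DecidableEq G] {R : Type*} [CommRing R]
  {M : Type*} [AddCommGroup M] [Module R M]
  {𝒜 : G → AddSubgroup R} {ℳ : G → AddSubgroup M}

/-- If `N` is a graded submodule, every homogeneous component of an element of `N`
lies in `N`. -/
theorem gradeComp_mem_of_isGraded (h𝒜 : IsRingGrading 𝒜) (hℳ : IsModuleGrading 𝒜 ℳ)
    {N : Submodule R M} (hN : IsGradedSubmodule ℳ N) {n : M} (hn : n ∈ N) (γ : G) :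
    gradeComp ℳ hℳ.isInternal γ n ∈ N := by
  set hm := hℳ.isInternal
  -- the set of elements all of whose components are in `N` is a submodule
  let N' : Submodule R M :=
    { carrier := {x : M | ∀ γ : G, gradeComp ℳ hm γ x ∈ N}
      zero_mem' := fun γ => by rw [gradeComp_zero hm]; exact N.zero_mem
      add_mem' := fun {a b} ha hb γ => by
        rw [gradeComp_add hm]; exact N.add_mem (ha γ) (hb γ)
      smul_mem' := by
        intro r x hx γ
        obtain ⟨sr, hsr⟩ := exists_sum_gradeComp h𝒜.isInternal r
        obtain ⟨sx, hsx⟩ := exists_sum_gradeComp hm x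
        have : r • x = ∑ α ∈ sr, ∑ β ∈ sx,
            (gradeComp 𝒜 h𝒜.isInternal α r) • (gradeComp ℳ hm β x) := by
          conv_lhs => rw [hsr, hsx]
          rw [Finset.sum_smul]
          exact Finset.sum_congr rfl fun α _ => Finset.smul_sum
        rw [this, gradeComp_sum hm]
        refine Submodule.sum_mem N fun α _ => ?_
        rw [gradeComp_sum hm]
        refine Submodule.sum_mem N fun β _ => ?_
        have hmem : (gradeComp 𝒜 h𝒜.isInternal α r) • (gradeComp ℳ hm β x) ∈ ℳ (α * β) :=
          hℳ.smul_mem (gradeComp_mem h𝒜.isInternal α r) (gradeComp_mem hm β x)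
        rw [gradeComp_of_mem hm hmem]
        split
        · exact N.smul_mem _ (hx β)
        · exact N.zero_mem }
  have hspan : Submodule.span R {m : M | m ∈ N ∧ ∃ α, m ∈ ℳ α} ≤ N' := by
    rw [Submodule.span_le]
    rintro m ⟨hmN, δ, hmδ⟩ γ
    show gradeComp ℳ hm γ m ∈ N
    rw [gradeComp_of_mem hm hmδ]
    split
    · exact hmN
    · exact N.zero_mem
  exact hspan (hN n hn) γ

theorem isGraded_of_gradeComp_mem (hℳ : IsModuleGrading 𝒜 ℳ) {N : Submodule R M}
    (h : ∀ n ∈ N, ∀ γ : G, gradeComp ℳ hℳ.isInternal γ n ∈ N) :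
    IsGradedSubmodule ℳ N := by
  intro n hn
  obtain ⟨s, hs⟩ := exists_sum_gradeComp hℳ.isInternal n
  rw [hs]
  refine Submodule.sum_mem _ fun γ _ => Submodule.subset_span ?_
  exact ⟨h n hn γ, γ, gradeComp_mem hℳ.isInternal γ n⟩

theorem isGraded_inf (h𝒜 : IsRingGrading 𝒜) (hℳ : IsModuleGrading 𝒜 ℳ)
    {N₁ N₂ : Submodule R M} (h₁ : IsGradedSubmodule ℳ N₁) (h₂ : IsGradedSubmodule ℳ N₂) :
    IsGradedSubmodule ℳ (N₁ ⊓ N₂) := by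
  refine isGraded_of_gradeComp_mem hℳ fun n hn γ => ?_
  exact ⟨gradeComp_mem_of_isGraded h𝒜 hℳ h₁ hn.1 γ,
    gradeComp_mem_of_isGraded h𝒜 hℳ h₂ hn.2 γ⟩

/-- Separation by completely graded irreducible submodules. -/
theorem exists_cgi (h𝒜 : IsRingGrading 𝒜) (hℳ : IsModuleGrading 𝒜 ℳ)
    {N : Submodule R M} (hN : IsGradedSubmodule ℳ N) {x : M} (hx : x ∉ N) :
    ∃ U : Submodule R M, CompletelyGradedIrreducible ℳ U ∧ N ≤ U ∧ x ∉ U := by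
  set s : Set (Submodule R M) := {D | IsGradedSubmodule ℳ D ∧ x ∉ D}
  have hzorn : ∃ m, N ≤ m ∧ Maximal (· ∈ s) m := by
    refine zorn_le_nonempty₀ s ?_ N ⟨hN, hx⟩
    intro c hcs hchain y hy
    have hcne : c.Nonempty := ⟨y, hy⟩
    have hdir : DirectedOn (· ≤ ·) c := hchain.directedOn
    refine ⟨sSup c, ⟨?_, ?_⟩, fun z hz => le_sSup hz⟩
    · -- sSup of a chain of graded submodules is graded
      intro n hn
      obtain ⟨D, hDc, hnD⟩ := (Submodule.mem_sSup_of_directed hcne hdir).1 hn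
      refine Submodule.span_mono ?_ ((hcs hDc).1 n hnD)
      rintro m ⟨hmD, α, hmα⟩
      exact ⟨le_sSup hDc hmD, α, hmα⟩
    · intro hxc
      obtain ⟨D, hDc, hxD⟩ := (Submodule.mem_sSup_of_directed hcne hdir).1 hxc
      exact (hcs hDc).2 hxD
  obtain ⟨m, hNm, hm⟩ := hzorn
  refine ⟨m, ⟨hm.1.1, ?_, ?_⟩, hNm, hm.1.2⟩
  · intro htop
    exact hm.1.2 (htop ▸ Submodule.mem_top)
  · intro S hSg hEq
    by_contra hmS
    have hxS : x ∈ sInf S := by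
      refine Submodule.mem_sInf.2 fun E hE => ?_
      have hmE : m ≤ E := hEq ▸ sInf_le hE
      by_contra hxE
      have hEs : E ∈ s := ⟨hSg E hE, hxE⟩
      have : E ≤ m := hm.2 hEs hmE
      exact hmS ((le_antisymm hmE this) ▸ hE)
    exact hm.1.2 (hEq ▸ hxS)

end Graded

theorem stmt8 {G : Type*} [Group G] [DecidableEq G] {R : Type*} [CommRing R]
    {M : Type*} [AddCommGroup M] [Module R M]
    (𝒜 : G → AddSubgroup R) (ℳ : G → AddSubgroup M)
    (h𝒜 : IsRingGrading 𝒜) (hℳ : IsModuleGrading 𝒜 ℳ)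
    (C : Submodule R M) (hC0 : C ≠ ⊥) (hCgr : IsGradedSubmodule ℳ C) :
    IsGrStronglyClassical2AbsorbingSecond 𝒜 ℳ C ↔
      ∀ r s t : R, (∃ α, r ∈ 𝒜 α) → (∃ β, s ∈ 𝒜 β) → (∃ γ, t ∈ 𝒜 γ) →
        ∀ N : Submodule R M, IsGradedSubmodule ℳ N → r • s • t • C ≤ N →
          (r • s • C ≤ N ∨ s • t • C ≤ N ∨ r • t • C ≤ N) := by
  constructor
  · rintro ⟨-, -, hstr⟩ r s t hr hs ht N hNg hle
    by_contra hcon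
    push_neg at hcon
    obtain ⟨h1, h2, h3⟩ := hcon
    obtain ⟨x, hxm, hxN⟩ := SetLike.not_le_iff_exists.1 h1
    obtain ⟨y, hym, hyN⟩ := SetLike.not_le_iff_exists.1 h2
    obtain ⟨z, hzm, hzN⟩ := SetLike.not_le_iff_exists.1 h3
    obtain ⟨U₁, hU₁, hNU₁, hxU₁⟩ := exists_cgi h𝒜 hℳ hNg hxN
    obtain ⟨U₂, hU₂, hNU₂, hyU₂⟩ := exists_cgi h𝒜 hℳ hNg hyN
    obtain ⟨U₃, hU₃, hNU₃, hzU₃⟩ := exists_cgi h𝒜 hℳ hNg hzN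
    have hle' : r • s • t • C ≤ U₁ ⊓ U₂ ⊓ U₃ :=
      le_inf (le_inf (hle.trans hNU₁) (hle.trans hNU₂)) (hle.trans hNU₃)
    rcases hstr r s t hr hs ht U₁ U₂ U₃ hU₁ hU₂ hU₃ hle' with h | h | h
    · exact hxU₁ ((h.trans (inf_le_left.trans inf_le_left)) hxm)
    · exact hyU₂ ((h.trans (inf_le_left.trans inf_le_right)) hym)
    · exact hzU₃ ((h.trans inf_le_right) hzm)
  · intro H
    refine ⟨hC0, hCgr, fun r s t hr hs ht U₁ U₂ U₃ h1 h2 h3 hle => ?_⟩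
    exact H r s t hr hs ht (U₁ ⊓ U₂ ⊓ U₃)
      (isGraded_inf h𝒜 hℳ (isGraded_inf h𝒜 hℳ h1.1 h2.1) h3.1) hle
end
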